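/- Let n ≥ 2 and m ≥ 2 be integers, let 1 ≤ i < j ≤ m, and let f ∈ R_m = ℤ[x_1, ..., x_m] have odd constant term c_f(1). Then the integer c_{f^{2^n}}(x_i x_j)/2^n + c_{f^{2^n}}(x_i^{2^{n−1}} x_j^{2^{n−1}})/2 is even. -/

import Mathlib

set_option linter.unusedSectionVars false

open MvPolynomial Finsupp

namespace Stmt11Aux

variable {σ : Type*} [DecidableEq σ] {R : Type*} [CommRing R]

lemma expand_monomial' (p : ℕ) (hp : p ≠ 0) (d : σ →₀ ℕ) (r : R) :
    expand p (monomial d r) = monomial (p • d) r := by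
  rw [expand_monomial, monomial_eq]

lemma coeff_expand' (p : ℕ) (hp : p ≠ 0) (d : σ →₀ ℕ) (f : MvPolynomial σ R) :
    coeff (p • d) (expand p f) = coeff d f := by
  have hinj : ∀ v : σ →₀ ℕ, p • v = p • d ↔ v = d := by
    intro v
    constructor
    · intro h
      ext a
      have := DFunLike.congr_fun h a
      simp only [Finsupp.smul_apply, smul_eq_mul] at this
      exact Nat.eq_of_mul_eq_mul_left (Nat.pos_of_ne_zero hp) this
    · rintro rfl; rfl
  conv_lhs => rw [f.as_sum]
  rw [map_sum, Finset.sum_congr rfl (fun v _ => expand_monomial' p hp v (coeff v f)),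
    MvPolynomial.coeff_sum]
  simp only [coeff_monomial, hinj]
  by_cases hd : d ∈ f.support
  · rw [Finset.sum_eq_single d (fun b _ hb => by simp [hb]) (fun h => absurd hd h)]
    simp
  · rw [Finset.sum_eq_zero fun b hb => by
      rw [if_neg]; rintro rfl; exact hd hb]
    simp [MvPolynomial.notMem_support_iff.mp hd]

lemma expand_expand' (p q : ℕ) (f : MvPolynomial σ R) :
    expand p (expand q f) = expand (q * p) f := by
  induction f using MvPolynomial.induction_on with
  | C a => rw [expand_C, expand_C, expand_C]
  | add r s hr hs => rw [map_add, map_add, map_add, hr, hs]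
  | mul_X r i hr => rw [map_mul, map_mul, map_mul, hr, expand_X, expand_X, map_pow, expand_X,
      ← pow_mul, mul_comm p q]

lemma sq_eq_expand (f : MvPolynomial σ (ZMod 2)) : f ^ 2 = expand 2 f := by
  induction f using MvPolynomial.induction_on with
  | C a => rw [expand_C, ← C_pow, ZMod.pow_card a]
  | add p q hp hq => rw [CharTwo.add_sq, map_add, hp, hq]
  | mul_X p i hp => rw [mul_pow, hp, map_mul, expand_X]

lemma pow_2pow_eq_expand (k : ℕ) (f : MvPolynomial σ (ZMod 2)) :
    f ^ (2 ^ k) = expand (2 ^ k) f := by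
  induction k with
  | zero => simp [expand_one_apply]
  | succ k ih => rw [pow_succ, pow_mul, ih, sq_eq_expand, expand_expand']

lemma antidiag_pair {i j : σ} (hij : i ≠ j) :
    Finset.HasAntidiagonal.antidiagonal (single i 1 + single j 1) =
      {((0 : σ →₀ ℕ), single i 1 + single j 1), (single i 1, single j 1),
       (single j 1, single i 1), (single i 1 + single j 1, 0)} := by
  ext ⟨a, b⟩
  simp only [Finset.HasAntidiagonal.mem_antidiagonal, Finset.mem_insert, Finset.mem_singleton, Prod.mk.injEq]
  constructor
  · intro h
    have hi := DFunLike.congr_fun h i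
    have hj := DFunLike.congr_fun h j
    simp [hij, Finsupp.single_apply, hij.symm] at hi hj
    have hother : ∀ k, k ≠ i → k ≠ j → a k = 0 ∧ b k = 0 := by
      intro k hki hkj
      have := DFunLike.congr_fun h k
      simp [Finsupp.single_apply, Ne.symm hki, Ne.symm hkj] at this
      omega
    have ha : a = single i (a i) + single j (a j) := by
      ext k
      by_cases hki : k = i
      · subst hki; simp [Finsupp.single_apply, hij.symm]
      · by_cases hkj : k = j
        · subst hkj; simp [Finsupp.single_apply, hij]
        · simp [Finsupp.single_apply, Ne.symm hki, Ne.symm hkj, (hother k hki hkj).1]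
    have hb : b = single i (b i) + single j (b j) := by
      ext k
      by_cases hki : k = i
      · subst hki; simp [Finsupp.single_apply, hij.symm]
      · by_cases hkj : k = j
        · subst hkj; simp [Finsupp.single_apply, hij]
        · simp [Finsupp.single_apply, Ne.symm hki, Ne.symm hkj, (hother k hki hkj).2]
    rcases Nat.le_one_iff_eq_zero_or_eq_one.mp (by omega : a i ≤ 1) with h1 | h1 <;>
    rcases Nat.le_one_iff_eq_zero_or_eq_one.mp (by omega : a j ≤ 1) with h2 | h2
    · left
      constructor
      · rw [ha, h1, h2]; simp
      · rw [hb, (by omega : b i = 1), (by omega : b j = 1)]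
    · right; right; left
      constructor
      · rw [ha, h1, h2]; simp
      · rw [hb, (by omega : b i = 1), (by omega : b j = 0)]; simp
    · right; left
      constructor
      · rw [ha, h1, h2]; simp [add_comm]
      · rw [hb, (by omega : b i = 0), (by omega : b j = 1)]; simp
    · right; right; right
      constructor
      · rw [ha, h1, h2]
      · rw [hb, (by omega : b i = 0), (by omega : b j = 0)]; simp
  · rintro (⟨rfl, rfl⟩ | ⟨rfl, rfl⟩ | ⟨rfl, rfl⟩ | ⟨rfl, rfl⟩) <;> simp [add_comm]

lemma ne_z {i : σ} : (single i 1 : σ →₀ ℕ) ≠ 0 := by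
  intro h; simpa using DFunLike.congr_fun h i

lemma ne_ij {i j : σ} (hij : i ≠ j) : (single i 1 : σ →₀ ℕ) ≠ single j 1 := by
  intro h
  have := DFunLike.congr_fun h i
  simp [Finsupp.single_apply, Ne.symm hij] at this

lemma ne_addl {i j : σ} (hij : i ≠ j) : (single i 1 : σ →₀ ℕ) ≠ single i 1 + single j 1 := by
  intro h
  have := DFunLike.congr_fun h j
  simp [Finsupp.single_apply, hij, Ne.symm hij] at this

lemma ne_addz {i j : σ} (hij : i ≠ j) : (single i 1 + single j 1 : σ →₀ ℕ) ≠ 0 := by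
  intro h
  have := DFunLike.congr_fun h i
  simp [Finsupp.single_apply, hij, Ne.symm hij] at this

lemma coeff_sq_pair {i j : σ} (hij : i ≠ j) (p : MvPolynomial σ R) :
    coeff (single i 1 + single j 1) (p ^ 2) =
      2 * (coeff 0 p * coeff (single i 1 + single j 1) p +
        coeff (single i 1) p * coeff (single j 1) p) := by
  rw [sq, coeff_mul, antidiag_pair hij]
  have haj : (single j 1 : σ →₀ ℕ) ≠ single i 1 + single j 1 := by
    rw [add_comm]; exact ne_addl hij.symm
  rw [Finset.sum_insert, Finset.sum_insert, Finset.sum_insert, Finset.sum_singleton]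
  · dsimp only; ring
  · simp only [Finset.mem_singleton, Prod.mk.injEq, not_and]
    intro h1; exact absurd h1 haj
  · simp only [Finset.mem_insert, Finset.mem_singleton, Prod.mk.injEq, not_or]
    refine ⟨fun h => (ne_ij hij.symm) h.1.symm, fun h => (ne_addl hij) h.1⟩
  · simp only [Finset.mem_insert, Finset.mem_singleton, Prod.mk.injEq, not_or]
    refine ⟨fun h => ne_z h.1.symm, fun h => (ne_z (i := j)) h.1.symm,
      fun h => (ne_addz hij) h.1.symm⟩

lemma coeff_sq_single (i : σ) (p : MvPolynomial σ R) :
    coeff (single i 1) (p ^ 2) = 2 * (coeff 0 p * coeff (single i 1) p) := by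
  rw [sq, coeff_mul, Finsupp.antidiagonal_single, Finset.sum_map]
  simp only [Finset.Nat.sum_antidiagonal_eq_sum_range_succ_mk]
  rw [Finset.sum_range_succ, Finset.sum_range_one]
  simp only [Function.Embedding.coe_prodMap, Function.Embedding.coeFn_mk, Prod.map_apply,
    Finsupp.single_zero, Nat.sub_zero, Nat.sub_self]
  ring

lemma mod2_of_sub {x y : ℤ} (z : ℤ) (h : x - y = 2 * z) : x ≡ y [ZMOD 2] :=
  (Int.modEq_iff_dvd.mpr ⟨z, by linarith⟩).symm

lemma partA {i j : σ} (hij : i ≠ j) (f : MvPolynomial σ ℤ) (hodd : Odd (coeff 0 f)) :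
    ∀ k, 1 ≤ k → ∃ α β t : ℤ,
      coeff (single i 1) (f ^ 2 ^ k) = 2 ^ k * α ∧
      coeff (single j 1) (f ^ 2 ^ k) = 2 ^ k * β ∧
      coeff (single i 1 + single j 1) (f ^ 2 ^ k) = 2 ^ k * t ∧
      t ≡ coeff (single i 1 + single j 1) f + coeff (single i 1) f * coeff (single j 1) f
        [ZMOD 2] := by
  have hoddk : ∀ k : ℕ, Odd (coeff 0 (f ^ k)) := fun k => by
    rw [← MvPolynomial.constantCoeff_eq, map_pow]
    exact hodd.pow
  intro k hk
  induction k with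
  | zero => omega
  | succ k ih =>
      rcases Nat.eq_or_lt_of_le hk with h1 | h1
      · obtain rfl : k = 0 := by omega
        refine ⟨coeff 0 f * coeff (single i 1) f, coeff 0 f * coeff (single j 1) f,
          coeff 0 f * coeff (single i 1 + single j 1) f
            + coeff (single i 1) f * coeff (single j 1) f, ?_, ?_, ?_, ?_⟩
        · rw [pow_one, coeff_sq_single]; ring
        · rw [pow_one, coeff_sq_single]; ring
        · rw [pow_one, coeff_sq_pair hij]; ring
        · obtain ⟨c, hc⟩ := hodd
          rw [hc]
          exact mod2_of_sub (c * coeff (single i 1 + single j 1) f) (by ring)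
      · obtain ⟨α, β, t, ha, hb, ht, htmod⟩ := ih (by omega)
        obtain ⟨c, hc⟩ := hoddk (2 ^ k)
        have hsq : f ^ 2 ^ (k + 1) = (f ^ 2 ^ k) ^ 2 := by
          rw [← pow_mul, pow_succ]
        refine ⟨(2 * c + 1) * α, (2 * c + 1) * β,
          (2 * c + 1) * t + 2 ^ k * (α * β), ?_, ?_, ?_, ?_⟩
        · rw [hsq, coeff_sq_single, ha, hc]; ring
        · rw [hsq, coeff_sq_single, hb, hc]; ring
        · rw [hsq, coeff_sq_pair hij, ha, hb, ht, hc]; ring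
        · have h2k : (2:ℤ) ^ k = 2 * 2 ^ (k - 1) := by
            rw [← pow_succ']
            congr 1
            omega
          refine Int.ModEq.trans (mod2_of_sub (c * t + 2 ^ (k - 1) * (α * β)) ?_) htmod
          rw [h2k]
          ring

def r24 : ZMod 4 →+* ZMod 2 := ZMod.castHom (by norm_num : (2:ℕ) ∣ 4) (ZMod 2)

lemma r24_zero : ∀ x : ZMod 4, r24 x = 0 → ∃ y, x = 2 * y := by decide

lemma key_sq (k : ℕ) (g : MvPolynomial σ (ZMod 4)) :
    g ^ (2 ^ (k + 1)) = expand (2 ^ k) (g ^ 2) := by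
  have hmap0 : map r24 (g ^ 2 ^ k - expand (2 ^ k) g) = 0 := by
    rw [map_sub, map_pow, map_expand, pow_2pow_eq_expand, sub_self]
  have hdvd : C (2 : ZMod 4) ∣ (g ^ 2 ^ k - expand (2 ^ k) g) := by
    rw [C_dvd_iff_dvd_coeff]
    intro d
    have h0 : r24 (coeff d (g ^ 2 ^ k - expand (2 ^ k) g)) = 0 := by
      rw [← coeff_map, hmap0, coeff_zero]
    obtain ⟨y, hy⟩ := r24_zero _ h0
    exact ⟨y, hy⟩
  obtain ⟨s, hs⟩ := hdvd
  have hC2 : (C (2 : ZMod 4) : MvPolynomial σ (ZMod 4)) = 2 := by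
    rw [show (2 : ZMod 4) = ((2 : ℕ) : ZMod 4) by norm_num, C_eq_coe_nat]
    norm_num
  rw [hC2] at hs
  have h2 : g ^ 2 ^ k = expand (2 ^ k) g + 2 * s := by
    rw [← hs]; ring
  have h4 : (2 : MvPolynomial σ (ZMod 4)) * 2 = 0 := by
    have h22 : (2 : ZMod 4) * 2 = 0 := by decide
    rw [← hC2, ← C_mul, h22, C_0]
  calc g ^ (2 ^ (k + 1)) = (g ^ 2 ^ k) ^ 2 := by rw [← pow_mul, pow_succ]
    _ = (expand (2 ^ k) g) ^ 2
        + 2 * 2 * (expand (2 ^ k) g * s + s * s) := by rw [h2]; ring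
    _ = (expand (2 ^ k) g) ^ 2 := by rw [h4]; ring
    _ = expand (2 ^ k) (g ^ 2) := by rw [map_pow]

lemma partB {i j : σ} (hij : i ≠ j) (f : MvPolynomial σ ℤ) (n : ℕ) (hn : 1 ≤ n) :
    ((coeff (single i (2 ^ (n - 1)) + single j (2 ^ (n - 1))) (f ^ 2 ^ n) : ℤ) : ZMod 4)
      = 2 * ((coeff 0 f * coeff (single i 1 + single j 1) f
          + coeff (single i 1) f * coeff (single j 1) f : ℤ) : ZMod 4) := by
  set g := map (Int.castRingHom (ZMod 4)) f with hg
  have hμ : (single i (2 ^ (n - 1)) + single j (2 ^ (n - 1)) : σ →₀ ℕ)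
      = (2 ^ (n - 1)) • (single i 1 + single j 1) := by
    rw [smul_add, Finsupp.smul_single, Finsupp.smul_single, smul_eq_mul, mul_one]
  have hcast : ∀ d : σ →₀ ℕ, ((coeff d f : ℤ) : ZMod 4) = coeff d g := by
    intro d
    rw [hg, coeff_map]
    rfl
  have hcastp : ∀ d : σ →₀ ℕ, ∀ e : ℕ, ((coeff d (f ^ e) : ℤ) : ZMod 4) = coeff d (g ^ e) := by
    intro d e
    rw [hg, ← map_pow, coeff_map]
    rfl
  rw [hcastp, hμ]
  have hn' : n = (n - 1) + 1 := by omega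
  rw [hn', Nat.add_sub_cancel] at *
  rw [key_sq, coeff_expand' _ (by positivity), coeff_sq_pair hij]
  push_cast
  rw [hcast, hcast, hcast, hcast]

end Stmt11Aux

open Stmt11Aux in
/-- If `f` has odd constant term, then the integer
`c_{f^{2^n}}(x_i x_j)/2^n + c_{f^{2^n}}(x_i^{2^{n-1}} x_j^{2^{n-1}})/2` is even. -/
theorem stmt_11 (n m : ℕ) (hn : 2 ≤ n) (hm : 2 ≤ m)
    (f : MvPolynomial (Fin m) ℤ) (i j : Fin m) (hij : i < j)
    (hodd : Odd (MvPolynomial.coeff 0 f)) :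
    Even (MvPolynomial.coeff (Finsupp.single i 1 + Finsupp.single j 1) (f ^ 2 ^ n) / 2 ^ n +
      MvPolynomial.coeff
        (Finsupp.single i (2 ^ (n - 1)) + Finsupp.single j (2 ^ (n - 1))) (f ^ 2 ^ n) / 2) := by
  have hij' : i ≠ j := ne_of_lt hij
  obtain ⟨α, β, t, ha, hb, ht, htmod⟩ := partA hij' f hodd n (by omega)
  have hB := partB hij' f n (by omega)
  set c := MvPolynomial.coeff 0 f
  set a := MvPolynomial.coeff (Finsupp.single i 1) f
  set b := MvPolynomial.coeff (Finsupp.single j 1) f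
  set d := MvPolynomial.coeff (Finsupp.single i 1 + Finsupp.single j 1) f
  set W := MvPolynomial.coeff
    (Finsupp.single i (2 ^ (n - 1)) + Finsupp.single j (2 ^ (n - 1))) (f ^ 2 ^ n) with hW
  -- turn hB into an integer congruence mod 4
  have hB' : W ≡ 2 * (c * d + a * b) [ZMOD 4] := by
    rw [Int.ModEq]
    have : ((W : ℤ) : ZMod 4) = ((2 * (c * d + a * b) : ℤ) : ZMod 4) := by
      rw [hB]; push_cast; ring
    exact (ZMod.intCast_eq_intCast_iff _ _ _).mp this
  obtain ⟨u, hu⟩ := Int.modEq_iff_dvd.mp hB'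
  -- W = 2 * (c*d + a*b) - 4*u
  have hWval : W = 2 * (c * d + a * b - 2 * u) := by
    rw [show (4:ℤ) * u = 2 * (2 * u) by ring] at hu
    linarith
  obtain ⟨v, hv⟩ := Int.modEq_iff_dvd.mp htmod
  obtain ⟨e, he⟩ := hodd
  rw [ht, hWval, Int.mul_ediv_cancel_left t (by positivity),
    Int.mul_ediv_cancel_left _ (by norm_num : (2:ℤ) ≠ 0)]
  refine ⟨d + a * b + e * d - u - v, ?_⟩
  have : c * d = (2 * e + 1) * d := by rw [he]
  rw [this]
  linarith
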